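/- arXiv:2108.07053 — 6 statements merged into one kernel-verified Lean document; each statement's English description precedes it below -/
import Mathlib

section
/- Let $\mathcal{X}$, $f$, $C$, $p^w$ be as in the geometric duality setting, with lower image $\mathcal{D} = \{(w,\alpha) \mid w \in C^+, \alpha \leq p^w\}$. If $w \in C^+ \setminus \{0\}$ and $x^w$ is optimal for $\min_{x\in\mathcal{X}} w^\top f(x)$, then $\mathcal{D} \subseteq \{(v,\alpha) \in \mathbb{R}^{q+1} \mid v^\top f(x^w) - \alpha \geq 0\}$ and $(w, p^w)$ lies on the boundary hyperplane $\{(v,\alpha) \mid v^\top f(x^w) - \alpha = 0\}$. -/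
open RealInnerProductSpace

/-- If `w ∈ C⁺ \ {0}` and `x^w` solves `min_{x ∈ 𝒳} ⟪w, f x⟫`, then the lower image `𝒟`
is contained in the halfspace `{(v, α) | ⟪v, f(x^w)⟫ - α ≥ 0}`, and `(w, p^w)` lies on the
boundary hyperplane `{(v, α) | ⟪v, f(x^w)⟫ - α = 0}`. -/
theorem stmt_6 (m q : ℕ) (X : Set (Fin m → ℝ))
    (hXne : X.Nonempty) (hXcpt : IsCompact X) (hXconv : Convex ℝ X)
    (f : (Fin m → ℝ) → EuclideanSpace ℝ (Fin q)) (hf : ContinuousOn f X)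
    (C : Set (EuclideanSpace ℝ (Fin q)))
    (hCne : C.Nonempty) (hCnetriv : C ≠ Set.univ)
    (hCpointed : ∀ x ∈ C, -x ∈ C → x = 0)
    (hCsolid : (interior C).Nonempty)
    (hCcl : IsClosed C) (hCconv : Convex ℝ C)
    (hCcone : ∀ c ∈ C, ∀ t : ℝ, 0 ≤ t → t • c ∈ C)
    (D : Set ((EuclideanSpace ℝ (Fin q)) × ℝ))
    (hD : D = {p | (∀ c ∈ C, 0 ≤ ⟪p.1, c⟫) ∧
      p.2 ≤ sInf ((fun x => ⟪p.1, f x⟫) '' X)})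
    (w : EuclideanSpace ℝ (Fin q)) (hw : ∀ c ∈ C, 0 ≤ ⟪w, c⟫) (hw0 : w ≠ 0)
    (pw : ℝ) (hpw : pw = sInf ((fun x => ⟪w, f x⟫) '' X))
    (xw : Fin m → ℝ) (hxwX : xw ∈ X)
    (hxwopt : ∀ x ∈ X, ⟪w, f xw⟫ ≤ ⟪w, f x⟫) :
    (∀ p ∈ D, 0 ≤ ⟪p.1, f xw⟫ - p.2) ∧ ⟪w, f xw⟫ - pw = 0 := by
  have hbdd : ∀ v : EuclideanSpace ℝ (Fin q),
      BddBelow ((fun x => ⟪v, f x⟫) '' X) := by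
    intro v
    exact (hXcpt.image_of_continuousOn
      ((continuous_const.inner continuous_id).comp_continuousOn hf)).bddBelow
  constructor
  · intro p hp
    rw [hD] at hp
    have h1 : p.2 ≤ sInf ((fun x => ⟪p.1, f x⟫) '' X) := hp.2
    have h2 : sInf ((fun x => ⟪p.1, f x⟫) '' X) ≤ ⟪p.1, f xw⟫ :=
      csInf_le (hbdd p.1) ⟨xw, hxwX, rfl⟩
    linarith
  · have h1 : sInf ((fun x => ⟪w, f x⟫) '' X) ≤ ⟪w, f xw⟫ :=
      csInf_le (hbdd w) ⟨xw, hxwX, rfl⟩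
    have h2 : ⟪w, f xw⟫ ≤ sInf ((fun x => ⟪w, f x⟫) '' X) := by
      apply le_csInf (hXne.image _)
      rintro b ⟨x, hx, rfl⟩
      exact hxwopt x hx
    rw [hpw]; linarith
end

section
/- Define $\varphi(y, w, \alpha) = w^\top y - \alpha$, the upper image $\mathcal{P} = f(\mathcal{X}) + C$ and the lower image $\mathcal{D} = \{(w,\alpha) \mid w \in C^+, \alpha \leq \inf_{x\in\mathcal{X}} w^\top f(x)\}$. Then $\mathcal{D} = \{(w,\alpha) \in \mathbb{R}^{q+1} \mid \forall y \in \mathcal{P}: \varphi(y,w,\alpha) \geq 0\}$, i.e., the lower image consists exactly of the pairs $(w,\alpha)$ such that $w^\top y \geq \alpha$ for all $y \in \mathcal{P}$. -/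
open RealInnerProductSpace Pointwise

/-- With coupling `φ(y, w, α) = ⟪w, y⟫ - α`, the lower image
`𝒟 = {(w, α) | w ∈ C⁺, α ≤ inf_{x ∈ 𝒳} ⟪w, f x⟫}` consists exactly of the pairs `(w, α)`
such that `⟪w, y⟫ ≥ α` for every `y` in the upper image `𝒫 = f(𝒳) + C`. -/
theorem stmt_7 (m q : ℕ) (X : Set (Fin m → ℝ))
    (hXne : X.Nonempty) (hXcpt : IsCompact X) (hXconv : Convex ℝ X)
    (f : (Fin m → ℝ) → EuclideanSpace ℝ (Fin q)) (hf : ContinuousOn f X)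
    (C : Set (EuclideanSpace ℝ (Fin q)))
    (hCne : C.Nonempty) (hCnetriv : C ≠ Set.univ)
    (hCpointed : ∀ x ∈ C, -x ∈ C → x = 0)
    (hCsolid : (interior C).Nonempty)
    (hCcl : IsClosed C) (hCconv : Convex ℝ C)
    (hCcone : ∀ c ∈ C, ∀ t : ℝ, 0 ≤ t → t • c ∈ C)
    (hfC : ∀ x₁ ∈ X, ∀ x₂ ∈ X, ∀ t : ℝ, 0 ≤ t → t ≤ 1 →
      (t • f x₁ + (1 - t) • f x₂) - f (t • x₁ + (1 - t) • x₂) ∈ C)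
    (P : Set (EuclideanSpace ℝ (Fin q))) (hP : P = f '' X + C)
    (D : Set ((EuclideanSpace ℝ (Fin q)) × ℝ))
    (hD : D = {p | (∀ c ∈ C, 0 ≤ ⟪p.1, c⟫) ∧
      p.2 ≤ sInf ((fun x => ⟪p.1, f x⟫) '' X)}) :
    D = {p | ∀ y ∈ P, p.2 ≤ ⟪p.1, y⟫} := by
  have hzero : (0 : EuclideanSpace ℝ (Fin q)) ∈ C := by
    obtain ⟨c, hc⟩ := hCne
    have := hCcone c hc 0 le_rfl
    simpa using this
  subst hP hD
  ext ⟨w, α⟩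
  simp only [Set.mem_setOf_eq]
  constructor
  · rintro ⟨hw, hα⟩ y hy
    rw [Set.mem_add] at hy
    obtain ⟨u, hu, c, hc, rfl⟩ := hy
    obtain ⟨x, hx, rfl⟩ := hu
    -- the image set is nonempty and bounded below
    have hcont : ContinuousOn (fun x => ⟪w, f x⟫) X :=
      (continuous_const.inner continuous_id).comp_continuousOn hf
    have hcpt : IsCompact ((fun x => ⟪w, f x⟫) '' X) := hXcpt.image_of_continuousOn hcont
    have hbdd : BddBelow ((fun x => ⟪w, f x⟫) '' X) := hcpt.bddBelow
    have h1 : sInf ((fun x => ⟪w, f x⟫) '' X) ≤ ⟪w, f x⟫ :=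
      csInf_le hbdd ⟨x, hx, rfl⟩
    have h2 : (0:ℝ) ≤ ⟪w, c⟫ := hw c hc
    calc α ≤ ⟪w, f x⟫ := hα.trans h1
      _ ≤ ⟪w, f x⟫ + ⟪w, c⟫ := by linarith
      _ = ⟪w, f x + c⟫ := (inner_add_right w (f x) c).symm
  · intro h
    obtain ⟨x₀, hx₀⟩ := hXne
    have hmem : ∀ x ∈ X, ∀ c ∈ C, α ≤ ⟪w, f x + c⟫ := by
      intro x hx c hc
      exact h _ (Set.add_mem_add ⟨x, hx, rfl⟩ hc)
    constructor
    · intro c hc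
      by_contra hneg
      push_neg at hneg
      -- choose t large
      set t : ℝ := (α - ⟪w, f x₀⟫ - 1) / ⟪w, c⟫ with ht
      have ht0 : 0 ≤ max t 0 := le_max_right _ _
      have hk := hmem x₀ hx₀ _ (hCcone c hc _ ht0)
      rw [inner_add_right, real_inner_smul_right] at hk
      have hle : max t 0 * ⟪w, c⟫ ≤ t * ⟪w, c⟫ := by
        apply mul_le_mul_of_nonpos_right (le_max_left _ _) hneg.le
      have : t * ⟪w, c⟫ = α - ⟪w, f x₀⟫ - 1 := by
        rw [ht, div_mul_cancel₀ _ hneg.ne]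
      linarith
    · refine le_csInf ⟨⟪w, f x₀⟫, ⟨x₀, hx₀, rfl⟩⟩ ?_
      rintro b ⟨x, hx, rfl⟩
      have := hmem x hx 0 hzero
      simpa using this
end

section
/- With upper image $\mathcal{P} = f(\mathcal{X}) + C$ and lower image $\mathcal{D} = \{(w,\alpha) \mid w \in C^+, \alpha \leq \inf_{x\in\mathcal{X}} w^\top f(x)\}$, it holds that $\mathcal{P} = \{y \in \mathbb{R}^q \mid \forall (w,\alpha) \in \mathcal{D}: w^\top y \geq \alpha\}$, i.e., the upper image is recovered from the lower image via the bilinear coupling $\varphi(y,w,\alpha) = w^\top y - \alpha$. -/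
open RealInnerProductSpace Pointwise

/-- With coupling `φ(y, w, α) = ⟪w, y⟫ - α`, the upper image `𝒫 = f(𝒳) + C` is recovered from the lower image
`𝒟 = {(w, α) | w ∈ C⁺, α ≤ inf_{x ∈ 𝒳} ⟪w, f x⟫}` as the set of `y` with `⟪w, y⟫ ≥ α`
for all `(w, α) ∈ 𝒟`. -/
theorem stmt_8 (m q : ℕ) (X : Set (Fin m → ℝ))
    (hXne : X.Nonempty) (hXcpt : IsCompact X) (hXconv : Convex ℝ X)
    (f : (Fin m → ℝ) → EuclideanSpace ℝ (Fin q)) (hf : ContinuousOn f X)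
    (C : Set (EuclideanSpace ℝ (Fin q)))
    (hCne : C.Nonempty) (hCnetriv : C ≠ Set.univ)
    (hCpointed : ∀ x ∈ C, -x ∈ C → x = 0)
    (hCsolid : (interior C).Nonempty)
    (hCcl : IsClosed C) (hCconv : Convex ℝ C)
    (hCcone : ∀ c ∈ C, ∀ t : ℝ, 0 ≤ t → t • c ∈ C)
    (hfC : ∀ x₁ ∈ X, ∀ x₂ ∈ X, ∀ t : ℝ, 0 ≤ t → t ≤ 1 →
      (t • f x₁ + (1 - t) • f x₂) - f (t • x₁ + (1 - t) • x₂) ∈ C)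
    (P : Set (EuclideanSpace ℝ (Fin q))) (hP : P = f '' X + C)
    (D : Set ((EuclideanSpace ℝ (Fin q)) × ℝ))
    (hD : D = {p | (∀ c ∈ C, 0 ≤ ⟪p.1, c⟫) ∧
      p.2 ≤ sInf ((fun x => ⟪p.1, f x⟫) '' X)}) :
    P = {y | ∀ p ∈ D, p.2 ≤ ⟪p.1, y⟫} := by
  obtain ⟨c₀, hc₀⟩ := hCne
  have h0C : (0 : EuclideanSpace ℝ (Fin q)) ∈ C := by
    simpa using hCcone c₀ hc₀ 0 le_rfl
  have hCC : ∀ c₁ ∈ C, ∀ c₂ ∈ C, c₁ + c₂ ∈ C := by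
    intro c₁ h₁ c₂ h₂
    have hmid : (1/2 : ℝ) • c₁ + (1/2 : ℝ) • c₂ ∈ C := by
      have := hCconv h₁ h₂ (by norm_num : (0:ℝ) ≤ 1/2) (by norm_num : (0:ℝ) ≤ 1/2) (by norm_num)
      simpa using this
    have := hCcone _ hmid 2 (by norm_num)
    simpa [smul_add, smul_smul] using this
  have hPconv : Convex ℝ P := by
    rw [hP]
    intro y₁ hy₁ y₂ hy₂ a b ha hb hab
    obtain ⟨u₁, ⟨x₁, hx₁, rfl⟩, c₁, hc₁, rfl⟩ := hy₁
    obtain ⟨u₂, ⟨x₂, hx₂, rfl⟩, c₂, hc₂, rfl⟩ := hy₂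
    have hb' : b = 1 - a := by linarith
    subst hb'
    have hgap := hfC x₁ hx₁ x₂ hx₂ a ha (by linarith)
    have hcc : a • c₁ + (1-a) • c₂ ∈ C := hCconv hc₁ hc₂ ha hb (by ring)
    refine ⟨f (a • x₁ + (1-a) • x₂), ⟨_, hXconv hx₁ hx₂ ha hb (by ring), rfl⟩,
      ((a • f x₁ + (1-a) • f x₂) - f (a • x₁ + (1-a) • x₂)) + (a • c₁ + (1-a) • c₂),
      hCC _ hgap _ hcc, ?_⟩
    simp only [smul_add]
    abel
  have hPcl : IsClosed P := by
    rw [hP]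
    exact hCcl.add_left_of_isCompact (hXcpt.image_of_continuousOn hf)
  ext y
  simp only [Set.mem_setOf_eq]
  constructor
  · rintro hy p hpD
    rw [hD] at hpD
    obtain ⟨hw, hα⟩ := hpD
    rw [hP] at hy
    obtain ⟨u, ⟨x, hx, rfl⟩, c, hc, rfl⟩ := hy
    have hcont : ContinuousOn (fun x => ⟪p.1, f x⟫) X := continuousOn_const.inner hf
    have h1 : sInf ((fun x => ⟪p.1, f x⟫) '' X) ≤ ⟪p.1, f x⟫ :=
      csInf_le (hXcpt.image_of_continuousOn hcont).bddBelow ⟨x, hx, rfl⟩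
    calc p.2 ≤ ⟪p.1, f x⟫ := le_trans hα h1
      _ ≤ ⟪p.1, f x + c⟫ := by
          rw [inner_add_right]; linarith [hw c hc]
  · intro hy
    by_contra hyP
    obtain ⟨g, u, hgy, hgP⟩ := geometric_hahn_banach_point_closed hPconv hPcl hyP
    set w : EuclideanSpace ℝ (Fin q) := (InnerProductSpace.toDual ℝ _).symm g with hwdef
    have hwz : ∀ z : EuclideanSpace ℝ (Fin q), ⟪w, z⟫ = g z := fun z =>
      InnerProductSpace.toDual_symm_apply
    obtain ⟨x₀, hx₀⟩ := hXne
    have hfxP : ∀ x ∈ X, f x ∈ P := by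
      intro x hx
      rw [hP]; exact ⟨f x, ⟨x, hx, rfl⟩, 0, h0C, by simp⟩
    have hwC : ∀ c ∈ C, 0 ≤ ⟪w, c⟫ := by
      intro c hc
      by_contra hneg
      push_neg at hneg
      have key : ∀ t : ℝ, 0 ≤ t → u < ⟪w, f x₀⟫ + t * ⟪w, c⟫ := by
        intro t ht
        have hmem : f x₀ + t • c ∈ P := by
          rw [hP]
          exact ⟨f x₀, ⟨x₀, hx₀, rfl⟩, t • c, hCcone c hc t ht, rfl⟩
        have := hgP _ hmem
        rw [← hwz] at this
        simpa [inner_add_right, inner_smul_right] using this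
      have h0 : u < ⟪w, f x₀⟫ := by simpa using key 0 le_rfl
      set t := (⟪w, f x₀⟫ - u + 1) / (-⟪w, c⟫) with htdef
      have ht : 0 ≤ t := div_nonneg (by linarith) (by linarith)
      have h2 := key t ht
      have h3 : t * ⟪w, c⟫ = -(⟪w, f x₀⟫ - u + 1) := by
        calc t * ⟪w, c⟫ = -(t * -⟪w, c⟫) := by ring
          _ = -(⟪w, f x₀⟫ - u + 1) := by
              rw [htdef, div_mul_cancel₀ _ (neg_ne_zero.mpr hneg.ne)]
      rw [h3] at h2
      linarith
    have hub : u ≤ sInf ((fun x => ⟪w, f x⟫) '' X) := by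
      apply le_csInf (Set.Nonempty.image _ ⟨x₀, hx₀⟩)
      rintro b ⟨x, hx, rfl⟩
      have := hgP _ (hfxP x hx)
      rw [← hwz] at this
      exact this.le
    have hD' : (w, sInf ((fun x => ⟪w, f x⟫) '' X)) ∈ D := by
      rw [hD]; exact ⟨hwC, le_rfl⟩
    have hle := hy _ hD'
    simp only at hle
    rw [hwz] at hle
    linarith [le_trans hub hle]
end

section
/- Let $\emptyset \neq \bar{\mathcal{D}} \subseteq \mathbb{R}^{q+1}$ be a closed convex cone satisfying $\bar{\mathcal{D}} = \bar{\mathcal{D}} - K$ where $K = \operatorname{cone}\{e^{q+1}\}$, and suppose $\mathcal{P}_{\bar{\mathcal{D}}} = \{y \in \mathbb{R}^q \mid \forall (w,\alpha) \in \bar{\mathcal{D}}: w^\top y \geq \alpha\}$ is nonempty. Then $\mathcal{D}_{\mathcal{P}_{\bar{\mathcal{D}}}} = \bar{\mathcal{D}}$, where $\mathcal{D}_{A} = \{(w,\alpha) \mid \forall y \in A: w^\top y \geq \alpha\}$. -/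
open RealInnerProductSpace

set_option maxHeartbeats 1000000

/-- Let `𝒟̄ ⊆ ℝ^{q+1}` be a nonempty closed convex cone which is a lower set
(`𝒟̄ = 𝒟̄ - K` with `K = cone{e^{q+1}}`), such that
`𝒫_𝒟̄ = {y | ∀ (w, α) ∈ 𝒟̄, ⟪w, y⟫ ≥ α}` is nonempty.  Then `𝒟_(𝒫_𝒟̄) = 𝒟̄`. -/
theorem stmt_10 (q : ℕ) (Dbar : Set ((EuclideanSpace ℝ (Fin q)) × ℝ))
    (hne : Dbar.Nonempty) (hcl : IsClosed Dbar) (hconv : Convex ℝ Dbar)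
    (hcone : ∀ p ∈ Dbar, ∀ t : ℝ, 0 ≤ t → t • p ∈ Dbar)
    (hlower : ∀ p ∈ Dbar, ∀ t : ℝ, 0 ≤ t → ((p.1, p.2 - t) : _ × ℝ) ∈ Dbar)
    (PD : Set (EuclideanSpace ℝ (Fin q)))
    (hPD : PD = {y | ∀ p ∈ Dbar, p.2 ≤ ⟪p.1, y⟫})
    (hPDne : PD.Nonempty) :
    {p : (EuclideanSpace ℝ (Fin q)) × ℝ | ∀ y ∈ PD, p.2 ≤ ⟪p.1, y⟫} = Dbar := by
  apply Set.eq_of_subset_of_subset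
  · -- hard direction
    intro p hp
    by_contra hpn
    obtain ⟨f, u, hfu, hub⟩ := geometric_hahn_banach_point_closed hconv hcl hpn
    -- 0 ∈ Dbar
    obtain ⟨p₀, hp₀⟩ := hne
    have h0 : (0 : (EuclideanSpace ℝ (Fin q)) × ℝ) ∈ Dbar := by
      have := hcone p₀ hp₀ 0 le_rfl
      simpa using this
    have hu0 : u < 0 := by simpa using hub 0 h0
    -- f nonneg on Dbar
    have hfpos : ∀ r ∈ Dbar, 0 ≤ f r := by
      intro r hr
      by_contra hneg
      push_neg at hneg
      obtain ⟨t, ht0, htu⟩ : ∃ t : ℝ, 0 ≤ t ∧ t * f r < u := by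
        refine ⟨(u - 1) / f r, ?_, ?_⟩
        · exact div_nonneg_iff.mpr (Or.inr ⟨by linarith, hneg.le⟩)
        · rw [div_mul_cancel₀ _ hneg.ne]; linarith
      have := hub (t • r) (hcone r hr t ht0)
      rw [map_smul] at this
      simp only [smul_eq_mul] at this
      linarith
    -- decomposition of f
    set s : ℝ := f (0, 1) with hs
    set g : (EuclideanSpace ℝ (Fin q)) →L[ℝ] ℝ :=
      f.comp (ContinuousLinearMap.inl ℝ _ _) with hg
    have hdec : ∀ r : (EuclideanSpace ℝ (Fin q)) × ℝ, f r = g r.1 + r.2 * s := by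
      intro r
      have : r = (r.1, (0:ℝ)) + r.2 • ((0 : EuclideanSpace ℝ (Fin q)), (1:ℝ)) := by
        ext <;> simp
      rw [this, map_add, map_smul]
      simp [hg, smul_eq_mul, hs]
    -- f p < 0
    have hfp : g p.1 + p.2 * s < 0 := by rw [← hdec]; linarith
    -- s ≤ 0
    have hsle : s ≤ 0 := by
      by_contra hspos
      push_neg at hspos
      have hmem := hlower p₀ hp₀ ((g p₀.1 + p₀.2 * s + 1) / s)
        (div_nonneg (by have := hfpos p₀ hp₀; rw [hdec] at this; linarith) hspos.le)
      have := hfpos _ hmem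
      rw [hdec] at this
      simp only at this
      rw [sub_mul, div_mul_cancel₀ _ hspos.ne'] at this
      linarith
    -- Riesz representation of g
    set x : EuclideanSpace ℝ (Fin q) := (InnerProductSpace.toDual ℝ _).symm g with hx
    have hxg : ∀ z, ⟪x, z⟫ = g z := fun z => InnerProductSpace.toDual_symm_apply
    rcases lt_or_eq_of_le hsle with hslt | hseq
    · -- s < 0
      set y' : EuclideanSpace ℝ (Fin q) := (1 / (-s)) • x with hy'
      have hy'PD : y' ∈ PD := by
        rw [hPD]
        intro r hr
        have h1 := hfpos r hr
        rw [hdec] at h1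
        have h2 : ⟪r.1, y'⟫ = (1 / (-s)) * g r.1 := by
          rw [hy', real_inner_smul_right, real_inner_comm, hxg]
        rw [h2, one_div, ← div_eq_inv_mul, le_div_iff₀ (by linarith)]
        nlinarith
      have hthis := hp y' hy'PD
      have h2 : ⟪p.1, y'⟫ = (1 / (-s)) * g p.1 := by
        rw [hy', real_inner_smul_right, real_inner_comm, hxg]
      rw [h2, one_div, ← div_eq_inv_mul, le_div_iff₀ (by linarith)] at hthis
      nlinarith
    · -- s = 0
      obtain ⟨y₀, hy₀⟩ := hPDne
      have hgw : g p.1 < 0 := by have h := hfp; rw [hseq] at h; linarith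
      have hxnn : ∀ r ∈ Dbar, 0 ≤ ⟪r.1, x⟫ := by
        intro r hr
        have h1 := hfpos r hr
        rw [hdec, hseq] at h1
        rw [real_inner_comm, hxg]; linarith
      set t : ℝ := (⟪p.1, y₀⟫ - p.2 + 1) / (-g p.1) with ht
      have hαy₀ : p.2 ≤ ⟪p.1, y₀⟫ := hp y₀ hy₀
      have ht0 : 0 ≤ t := by
        apply div_nonneg (by linarith) (by linarith)
      have hyt : y₀ + t • x ∈ PD := by
        rw [hPD]
        intro r hr
        rw [inner_add_right, real_inner_smul_right]
        have h1 : r.2 ≤ ⟪r.1, y₀⟫ := by rw [hPD] at hy₀; exact hy₀ r hr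
        have h2 := hxnn r hr
        nlinarith [mul_nonneg ht0 h2]
      have hthis := hp _ hyt
      rw [inner_add_right, real_inner_smul_right, real_inner_comm x, hxg, ht] at hthis
      have hne' : g p.1 ≠ 0 := by linarith
      have hgen : ∀ a b : ℝ, b ≠ 0 → a / -b * b = -a := by
        intro a b hb; rw [div_neg, neg_mul, neg_inj, div_mul_cancel₀ _ hb]
      have heq := hgen (⟪p.1, y₀⟫ - p.2 + 1) (g p.1) hne'
      linarith
  · intro r hr y hy
    rw [hPD] at hy
    exact hy r hr
end

section
/- In the geometric duality setting, let $(w,\alpha) \in \mathbb{R}^{q+1} \setminus \{0\}$ be a $K$-maximal element of the lower image $\mathcal{D}$. Then $H(w,\alpha) \cap \mathcal{P}$, where $H(w,\alpha) = \{y \in \mathbb{R}^q \mid w^\top y = \alpha\}$, is a nonempty weakly $C$-minimal exposed face of the upper image $\mathcal{P}$, and $\mathcal{P} \subseteq \{y \mid w^\top y \geq \alpha\}$. -/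
open RealInnerProductSpace Pointwise

/-- If `(w, α) ≠ 0` is a `K`-maximal element of the lower image `𝒟`, then
`H(w, α) ∩ 𝒫 = {y ∈ 𝒫 | ⟪w, y⟫ = α}` is a nonempty weakly `C`-minimal exposed face of the
upper image `𝒫 = f(𝒳) + C`, and `𝒫 ⊆ {y | ⟪w, y⟫ ≥ α}`. -/
theorem stmt_16 (m q : ℕ) (X : Set (Fin m → ℝ))
    (hXne : X.Nonempty) (hXcpt : IsCompact X) (hXconv : Convex ℝ X)
    (f : (Fin m → ℝ) → EuclideanSpace ℝ (Fin q)) (hf : ContinuousOn f X)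
    (C : Set (EuclideanSpace ℝ (Fin q)))
    (hCne : C.Nonempty) (hCnetriv : C ≠ Set.univ)
    (hCpointed : ∀ x ∈ C, -x ∈ C → x = 0)
    (hCsolid : (interior C).Nonempty)
    (hCcl : IsClosed C) (hCconv : Convex ℝ C)
    (hCcone : ∀ c ∈ C, ∀ t : ℝ, 0 ≤ t → t • c ∈ C)
    (hfC : ∀ x₁ ∈ X, ∀ x₂ ∈ X, ∀ t : ℝ, 0 ≤ t → t ≤ 1 →
      (t • f x₁ + (1 - t) • f x₂) - f (t • x₁ + (1 - t) • x₂) ∈ C)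
    (P : Set (EuclideanSpace ℝ (Fin q))) (hP : P = f '' X + C)
    (D : Set ((EuclideanSpace ℝ (Fin q)) × ℝ))
    (hD : D = {p | (∀ c ∈ C, 0 ≤ ⟪p.1, c⟫) ∧
      p.2 ≤ sInf ((fun x => ⟪p.1, f x⟫) '' X)})
    (w : EuclideanSpace ℝ (Fin q)) (α : ℝ)
    (hwα : (w, α) ∈ D) (hne0 : ((w, α) : _ × ℝ) ≠ 0)
    (hKmax : ∀ t : ℝ, 0 < t → ((w, α + t) : _ × ℝ) ∉ D) :
    (∀ y ∈ P, α ≤ ⟪w, y⟫) ∧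
    ({y ∈ P | ⟪w, y⟫ = α}).Nonempty ∧
    (∀ y ∈ P, ⟪w, y⟫ = α → ∀ c ∈ interior C, y - c ∉ P) := by

  subst hP hD
  obtain ⟨hw, hα⟩ := hwα
  set S := (fun x => ⟪w, f x⟫) '' X with hS
  have hScpt : IsCompact S := hXcpt.image_of_continuousOn (continuousOn_const.inner hf)
  have hSne : S.Nonempty := hXne.image _
  have hSbdd : BddBelow S := hScpt.bddBelow
  have hsInf_le : sInf S ≤ α := by
    by_contra h
    push_neg at h
    refine hKmax (sInf S - α) (by linarith) ⟨hw, ?_⟩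
    show α + (sInf S - α) ≤ sInf S
    linarith
  have hαeq : α = sInf S := le_antisymm hα hsInf_le
  have h0C : (0 : EuclideanSpace ℝ (Fin q)) ∈ C := by
    obtain ⟨c0, hc0⟩ := hCne
    simpa using hCcone c0 hc0 0 le_rfl
  have part1 : ∀ y ∈ f '' X + C, α ≤ ⟪w, y⟫ := by
    rintro y ⟨u, ⟨x, hx, rfl⟩, c, hc, rfl⟩
    have h1 : sInf S ≤ ⟪w, f x⟫ := csInf_le hSbdd ⟨x, hx, rfl⟩
    have h2 : 0 ≤ ⟪w, c⟫ := hw c hc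
    rw [inner_add_right]
    linarith
  refine ⟨part1, ?_, ?_⟩
  · have hmem : sInf S ∈ S := hScpt.sInf_mem hSne
    obtain ⟨x, hx, hxe⟩ := hmem
    refine ⟨f x + 0, Set.add_mem_add ⟨x, hx, rfl⟩ h0C, ?_⟩
    simp only [add_zero]
    rw [hαeq, ← hxe]
  · intro y hy hyα c hc hcontra
    have h1 : α ≤ ⟪w, y - c⟫ := part1 _ hcontra
    have h2 : ⟪w, y - c⟫ = α - ⟪w, c⟫ := by rw [inner_sub_right, hyα]
    have hcge : 0 ≤ ⟪w, c⟫ := hw c (interior_subset hc)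
    have hc0 : ⟪w, c⟫ = 0 := le_antisymm (by linarith) hcge
    have hw0 : w ≠ 0 := by
      intro hweq
      have hs0 : sInf S = 0 := by
        have h1 : ∀ s ∈ S, s = (0 : ℝ) := by
          rintro s ⟨x, hx, rfl⟩; rw [hweq]; simp
        obtain ⟨s, hsS⟩ := id hSne
        have hs := h1 s hsS
        refine le_antisymm (hs ▸ csInf_le hSbdd hsS) (le_csInf hSne fun b hb => (h1 b hb).ge)
      exact hne0 (by rw [hweq, hαeq, hs0]; rfl)
    obtain ⟨ε, hε, hball⟩ := Metric.isOpen_iff.mp isOpen_interior c hc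
    have hwn : 0 < ‖w‖ := norm_pos_iff.mpr hw0
    set c' := c - (ε / (2 * ‖w‖)) • w with hc'def
    have hc'mem : c' ∈ C := by
      apply interior_subset
      apply hball
      rw [Metric.mem_ball, dist_eq_norm, hc'def]
      have : c - (ε / (2 * ‖w‖)) • w - c = -((ε / (2 * ‖w‖)) • w) := by abel
      rw [this, norm_neg, norm_smul, Real.norm_eq_abs,
        abs_of_pos (by positivity : (0:ℝ) < ε / (2 * ‖w‖))]
      rw [div_mul_eq_mul_div, mul_comm]
      rw [mul_comm 2 ‖w‖, mul_div_mul_left _ _ (ne_of_gt hwn)]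
      linarith
    have hineq : 0 ≤ ⟪w, c'⟫ := hw c' hc'mem
    rw [hc'def, inner_sub_right, inner_smul_right, hc0, real_inner_self_eq_norm_sq] at hineq
    have : ε / (2 * ‖w‖) * ‖w‖ ^ 2 > 0 := by positivity
    linarith
end

section
/- For $\epsilon > 0$, let $\bar{\mathcal{X}} \subseteq \mathcal{X}$ be a nonempty finite set with $\operatorname{conv} f(\bar{\mathcal{X}}) + C + B(0,\epsilon) \supseteq \mathcal{P}$ (a finite weak $\epsilon$-infimizer), and let $\mathcal{P}_\epsilon = \operatorname{conv} f(\bar{\mathcal{X}}) + C + B(0,\epsilon)$ and $\mathcal{D}_\epsilon = \{(w,\alpha) \mid \forall y \in \mathcal{P}_\epsilon: w^\top y \geq \alpha\}$. Then $\operatorname{cone}((\mathcal{D}_\epsilon \cap (\mathbb{S}^{q-1} \times \mathbb{R})) + \epsilon\{e^{q+1}\}) - K \supseteq \mathcal{D} \supseteq \mathcal{D}_\epsilon$, where $\mathcal{D}$ is the lower image and $\mathbb{S}^{q-1} = \{w \mid \|w\|_* = 1\}$. -/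
open RealInnerProductSpace Pointwise

/-- If `𝒳̄` is a finite weak `ε`-infimizer of the primal problem, `𝒫_ε = conv f(𝒳̄) + C + B(0, ε)`
and `𝒟_ε = {(w, α) | ∀ y ∈ 𝒫_ε, ⟪w, y⟫ ≥ α}`, then
`cone ((𝒟_ε ∩ (𝕊^{q-1} × ℝ)) + ε{e^{q+1}}) - K ⊇ 𝒟 ⊇ 𝒟_ε`, where `𝒟` is the lower image,
`𝕊^{q-1}` the dual-norm unit sphere, `B(0, ε)` the closed `ε`-ball of the norm `N`, and
`K = cone{e^{q+1}}`. -/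
theorem stmt_18 (m q : ℕ) (X : Set (Fin m → ℝ))
    (hXne : X.Nonempty) (hXcpt : IsCompact X) (hXconv : Convex ℝ X)
    (f : (Fin m → ℝ) → EuclideanSpace ℝ (Fin q)) (hf : ContinuousOn f X)
    (C : Set (EuclideanSpace ℝ (Fin q)))
    (hCne : C.Nonempty) (hCnetriv : C ≠ Set.univ)
    (hCpointed : ∀ x ∈ C, -x ∈ C → x = 0)
    (hCsolid : (interior C).Nonempty)
    (hCcl : IsClosed C) (hCconv : Convex ℝ C)
    (hCcone : ∀ c ∈ C, ∀ t : ℝ, 0 ≤ t → t • c ∈ C)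
    (hfC : ∀ x₁ ∈ X, ∀ x₂ ∈ X, ∀ t : ℝ, 0 ≤ t → t ≤ 1 →
      (t • f x₁ + (1 - t) • f x₂) - f (t • x₁ + (1 - t) • x₂) ∈ C)
    (P : Set (EuclideanSpace ℝ (Fin q))) (hP : P = f '' X + C)
    (D : Set ((EuclideanSpace ℝ (Fin q)) × ℝ))
    (hD : D = {p | (∀ c ∈ C, 0 ≤ ⟪p.1, c⟫) ∧
      p.2 ≤ sInf ((fun x => ⟪p.1, f x⟫) '' X)})
    (N : EuclideanSpace ℝ (Fin q) → ℝ)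
    (hNtri : ∀ x y, N (x + y) ≤ N x + N y)
    (hNsmul : ∀ (c : ℝ) x, N (c • x) = |c| * N x)
    (hNdef : ∀ x, N x = 0 → x = 0)
    (Nd : EuclideanSpace ℝ (Fin q) → ℝ)
    (hNd : ∀ w, Nd w = sSup ((fun x => ⟪w, x⟫) '' {x | N x ≤ 1}))
    (ε : ℝ) (hε : 0 < ε)
    (Xbar : Set (Fin m → ℝ)) (hXbar : Xbar ⊆ X)
    (hXbarne : Xbar.Nonempty) (hXbarfin : Xbar.Finite)
    (Pε : Set (EuclideanSpace ℝ (Fin q)))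
    (hPε : Pε = convexHull ℝ (f '' Xbar) + C + {z | N z ≤ ε})
    (hinf : P ⊆ Pε)
    (Dε : Set ((EuclideanSpace ℝ (Fin q)) × ℝ))
    (hDε : Dε = {p | ∀ y ∈ Pε, p.2 ≤ ⟪p.1, y⟫}) :
    D ⊆ {p : (EuclideanSpace ℝ (Fin q)) × ℝ |
        ∃ s : ℝ, 0 ≤ s ∧ ∃ u ∈ Dε, Nd u.1 = 1 ∧
          ∃ t : ℝ, 0 ≤ t ∧ p = s • ((u.1, u.2 + ε) : (EuclideanSpace ℝ (Fin q)) × ℝ)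
            - ((0, t) : (EuclideanSpace ℝ (Fin q)) × ℝ)} ∧
      Dε ⊆ D := by
  -- basic facts about the norm N
  have hN0 : N 0 = 0 := by
    have := hNsmul 0 0; simpa using this
  have hNneg : ∀ x, N (-x) = N x := by
    intro x; have := hNsmul (-1) x; simpa using this
  have hNnonneg : ∀ x, 0 ≤ N x := by
    intro x
    have h := hNtri x (-x)
    rw [add_neg_cancel, hN0, hNneg] at h
    linarith
  -- an upper bound for N in terms of the Euclidean norm
  obtain ⟨K, hK0, hKle⟩ : ∃ K : ℝ, 0 ≤ K ∧ ∀ z, N z ≤ K * ‖z‖ := by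
    refine ⟨∑ i, N (EuclideanSpace.single i (1:ℝ)),
      Finset.sum_nonneg fun i _ => hNnonneg _, ?_⟩
    intro z
    have hsum : ∀ (s : Finset (Fin q)) (g : Fin q → EuclideanSpace ℝ (Fin q)),
        N (∑ i ∈ s, g i) ≤ ∑ i ∈ s, N (g i) := by
      intro s g
      induction s using Finset.induction with
      | empty => simp [hN0]
      | @insert a s ha ih =>
        rw [Finset.sum_insert ha, Finset.sum_insert ha]
        exact le_trans (hNtri _ _) (by linarith)
    have hrepr : ∑ i, z i • EuclideanSpace.single i (1:ℝ) = z := by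
      have := (EuclideanSpace.basisFun (Fin q) ℝ).sum_repr z
      simpa [EuclideanSpace.basisFun_apply] using this
    have habs : ∀ i : Fin q, |z i| ≤ ‖z‖ := by
      intro i
      have h := abs_real_inner_le_norm (EuclideanSpace.single i (1:ℝ)) z
      simpa [EuclideanSpace.inner_single_left, EuclideanSpace.norm_single] using h
    calc N z = N (∑ i, z i • EuclideanSpace.single i (1:ℝ)) := by rw [hrepr]
      _ ≤ ∑ i, N (z i • EuclideanSpace.single i (1:ℝ)) := hsum _ _
      _ = ∑ i, |z i| * N (EuclideanSpace.single i (1:ℝ)) := by simp [hNsmul]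
      _ ≤ ∑ i, ‖z‖ * N (EuclideanSpace.single i (1:ℝ)) :=
          Finset.sum_le_sum fun i _ =>
            mul_le_mul_of_nonneg_right (habs i) (hNnonneg _)
      _ = (∑ i, N (EuclideanSpace.single i (1:ℝ))) * ‖z‖ := by
          rw [Finset.sum_mul]
          exact Finset.sum_congr rfl fun i _ => mul_comm _ _
  -- N is continuous
  have hNcont : Continuous N := by
    apply LipschitzWith.continuous (K := K.toNNReal)
    refine LipschitzWith.of_dist_le_mul fun x y => ?_
    rw [Real.dist_eq, dist_eq_norm, Real.coe_toNNReal K hK0]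
    have h1 : N x ≤ N y + N (x - y) := by
      have := hNtri y (x - y); simpa using this
    have h2 : N y ≤ N x + N (x - y) := by
      have := hNtri x (y - x)
      have hxy : N (y - x) = N (x - y) := by
        rw [show y - x = -(x - y) from (neg_sub x y).symm, hNneg]
      rw [hxy] at this
      simpa using this
    have h3 : N (x - y) ≤ K * ‖x - y‖ := hKle _
    rw [abs_le]; constructor <;> linarith
  -- a lower bound for N in terms of the Euclidean norm
  obtain ⟨c, hc0, hcle⟩ : ∃ c : ℝ, 0 < c ∧ ∀ z, c * ‖z‖ ≤ N z := by
    rcases (Metric.sphere (0 : EuclideanSpace ℝ (Fin q)) 1).eq_empty_or_nonempty with hs | hs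
    · refine ⟨1, one_pos, fun z => ?_⟩
      rcases eq_or_ne z 0 with rfl | hz
      · simp [hN0]
      · exfalso
        have hzpos : (0:ℝ) < ‖z‖ := norm_pos_iff.2 hz
        have : ‖z‖⁻¹ • z ∈ Metric.sphere (0 : EuclideanSpace ℝ (Fin q)) 1 := by
          simp [norm_smul, abs_of_pos (inv_pos.2 hzpos), inv_mul_cancel₀ hzpos.ne']
        rw [hs] at this; exact this
    · obtain ⟨x₀, hx₀mem, hx₀min⟩ :=
        (isCompact_sphere (0 : EuclideanSpace ℝ (Fin q)) 1).exists_isMinOn hs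
          hNcont.continuousOn
      have hx₀ : ‖x₀‖ = 1 := by simpa using hx₀mem
      have hx₀ne : x₀ ≠ 0 := by
        intro h; rw [h] at hx₀; simp at hx₀
      have hcpos : 0 < N x₀ :=
        lt_of_le_of_ne (hNnonneg _) fun h => hx₀ne (hNdef _ h.symm)
      refine ⟨N x₀, hcpos, fun z => ?_⟩
      rcases eq_or_ne z 0 with rfl | hz
      · simp [hN0]
      · have hnz : (0:ℝ) < ‖z‖ := norm_pos_iff.2 hz
        have hmem : ‖z‖⁻¹ • z ∈ Metric.sphere (0 : EuclideanSpace ℝ (Fin q)) 1 := by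
          simp [norm_smul, abs_of_pos (inv_pos.2 hnz), inv_mul_cancel₀ hnz.ne']
        have hmin := isMinOn_iff.mp hx₀min _ hmem
        rw [hNsmul, abs_of_pos (inv_pos.2 hnz)] at hmin
        -- N x₀ ≤ ‖z‖⁻¹ * N z
        have := mul_le_mul_of_nonneg_left hmin hnz.le
        rw [← mul_assoc, mul_inv_cancel₀ hnz.ne', one_mul] at this
        linarith [this]
  -- boundedness of the dual-norm defining set
  have hSbdd : ∀ w : EuclideanSpace ℝ (Fin q),
      BddAbove ((fun x => ⟪w, x⟫) '' {x | N x ≤ 1}) := by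
    intro w
    refine ⟨‖w‖ * c⁻¹, ?_⟩
    rintro r ⟨x, hx, rfl⟩
    have hball : ‖x‖ ≤ c⁻¹ := by
      have h1 := hcle x
      have h2 : c * ‖x‖ ≤ 1 := le_trans h1 hx
      rw [← le_div_iff₀' hc0] at h2
      simpa [one_div] using h2
    calc ⟪w, x⟫ ≤ ‖w‖ * ‖x‖ := real_inner_le_norm w x
      _ ≤ ‖w‖ * c⁻¹ := mul_le_mul_of_nonneg_left hball (norm_nonneg w)
  have hNdge : ∀ w x, N x ≤ 1 → ⟪w, x⟫ ≤ Nd w := by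
    intro w x hx
    rw [hNd]
    exact le_csSup (hSbdd w) ⟨x, hx, rfl⟩
  have hNdpos : ∀ w, w ≠ 0 → 0 < Nd w := by
    intro w hw
    have hNw : 0 < N w :=
      lt_of_le_of_ne (hNnonneg w) fun h => hw (hNdef w h.symm)
    have hmem : N ((N w)⁻¹ • w) ≤ 1 := by
      rw [hNsmul, abs_of_pos (inv_pos.2 hNw), inv_mul_cancel₀ hNw.ne']
    have h := hNdge w _ hmem
    rw [real_inner_smul_right] at h
    have hip : 0 < ⟪w, w⟫ := by
      rw [real_inner_self_eq_norm_sq]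
      have : 0 < ‖w‖ := norm_pos_iff.2 hw
      positivity
    have : 0 < (N w)⁻¹ * ⟪w, w⟫ := mul_pos (inv_pos.2 hNw) hip
    linarith
  have hNdscale : ∀ (w : EuclideanSpace ℝ (Fin q)) (a : ℝ), 0 < a →
      Nd (a • w) = a * Nd w := by
    intro w a ha
    rw [hNd, hNd]
    have himg : (fun x => ⟪a • w, x⟫) '' {x | N x ≤ 1}
        = a • ((fun x => ⟪w, x⟫) '' {x | N x ≤ 1}) := by
      ext r
      simp only [Set.mem_image, Set.mem_smul_set, Set.mem_setOf_eq]
      constructor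
      · rintro ⟨x, hx, rfl⟩
        exact ⟨⟪w, x⟫, ⟨x, hx, rfl⟩, by rw [smul_eq_mul, ← real_inner_smul_left]⟩
      · rintro ⟨r, ⟨x, hx, rfl⟩, rfl⟩
        exact ⟨x, hx, by rw [real_inner_smul_left, smul_eq_mul]⟩
    rw [himg, Real.sSup_smul_of_nonneg ha.le, smul_eq_mul]
  -- dual pairing bound
  have hdual : ∀ (w z : EuclideanSpace ℝ (Fin q)), Nd w = 1 → N z ≤ ε →
      -ε ≤ ⟪w, z⟫ := by
    intro w z hw hz
    have hmem : N ((-ε⁻¹) • z) ≤ 1 := by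
      rw [hNsmul, abs_neg, abs_of_pos (inv_pos.2 hε)]
      calc ε⁻¹ * N z ≤ ε⁻¹ * ε := mul_le_mul_of_nonneg_left hz (inv_pos.2 hε).le
        _ = 1 := inv_mul_cancel₀ hε.ne'
    have h := hNdge w _ hmem
    rw [real_inner_smul_right, hw] at h
    have h2 := mul_le_mul_of_nonneg_left h hε.le
    rw [show ε * (-ε⁻¹ * ⟪w, z⟫) = -⟪w, z⟫ by field_simp] at h2
    linarith
  -- 0 ∈ C
  obtain ⟨c₀, hc₀⟩ := hCne
  have hC0 : (0 : EuclideanSpace ℝ (Fin q)) ∈ C := by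
    have := hCcone c₀ hc₀ 0 le_rfl; simpa using this
  -- second inclusion : Dε ⊆ D
  have hDεD : Dε ⊆ D := by
    intro p hp
    rw [hDε] at hp
    rw [hD]
    have hPsub : ∀ y ∈ P, p.2 ≤ ⟪p.1, y⟫ := fun y hy => hp y (hinf hy)
    have hfx : ∀ x ∈ X, p.2 ≤ ⟪p.1, f x⟫ := by
      intro x hx
      have hmem : f x ∈ P := by
        rw [hP]
        simpa using Set.add_mem_add (Set.mem_image_of_mem f hx) hC0
      exact hPsub _ hmem
    refine ⟨?_, ?_⟩
    · intro ch hc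
      by_contra hneg
      push_neg at hneg
      obtain ⟨x₀, hx₀⟩ := hXne
      set a := ⟪p.1, f x₀⟫ with ha
      set b := ⟪p.1, ch⟫ with hb
      have hp2a : p.2 ≤ a := hfx x₀ hx₀
      set t := (a - p.2 + 1) / (-b) with htdef
      have hbneg : 0 < -b := by linarith
      have ht : 0 ≤ t := div_nonneg (by linarith) hbneg.le
      have hmem : f x₀ + t • ch ∈ P := by
        rw [hP]
        exact Set.add_mem_add (Set.mem_image_of_mem f hx₀) (hCcone ch hc t ht)
      have hle := hPsub _ hmem
      rw [inner_add_right, real_inner_smul_right] at hle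
      have hbne : b ≠ 0 := ne_of_lt hneg
      have htb : t * b = -(a - p.2 + 1) := by
        rw [htdef]; field_simp
      rw [← ha, ← hb, htb] at hle
      linarith
    · refine le_csInf (hXne.image _) ?_
      rintro b ⟨x, hx, rfl⟩
      exact hfx x hx
  refine ⟨?_, hDεD⟩
  -- first inclusion
  intro p hp
  rw [hD] at hp
  obtain ⟨hpC, hpinf⟩ := hp
  have hcontin : ContinuousOn (fun x => ⟪p.1, f x⟫) X :=
    (continuous_const.inner continuous_id).comp_continuousOn hf
  have himgcpt : IsCompact ((fun x => ⟪p.1, f x⟫) '' X) :=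
    hXcpt.image_of_continuousOn hcontin
  have halin : ∀ x ∈ X, p.2 ≤ ⟪p.1, f x⟫ := fun x hx =>
    le_trans hpinf (csInf_le himgcpt.bddBelow ⟨x, hx, rfl⟩)
  -- a generic construction: given w₀ ∈ C⁺ with w₀ ≠ 0, normalize it
  rcases eq_or_ne p.1 0 with hw0 | hw0
  · -- p.1 = 0 ; use separation to find a nonzero element of C⁺
    obtain ⟨a₀, ha₀⟩ : ∃ a₀, a₀ ∉ C := by
      by_contra h; push_neg at h
      exact hCnetriv (Set.eq_univ_of_forall h)
    obtain ⟨g, u0, hg1, hg2⟩ := geometric_hahn_banach_point_closed hCconv hCcl ha₀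
    set w₀ := (InnerProductSpace.toDual ℝ (EuclideanSpace ℝ (Fin q))).symm g with hw₀def
    have hw₀eq : ∀ y, ⟪w₀, y⟫ = g y := fun y => InnerProductSpace.toDual_symm_apply
    have hw₀C : ∀ ch ∈ C, 0 ≤ ⟪w₀, ch⟫ := by
      intro ch hc
      by_contra hneg
      push_neg at hneg
      set b := ⟪w₀, ch⟫ with hbdef
      set t := (|u0| + 1) / (-b) with htdef
      have hbneg : 0 < -b := by linarith
      have hbne : b ≠ 0 := by intro h; rw [h] at hbneg; simp at hbneg
      have ht : 0 ≤ t := div_nonneg (by positivity) hbneg.le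
      have hkey := hg2 _ (hCcone ch hc t ht)
      rw [← hw₀eq, real_inner_smul_right, ← hbdef] at hkey
      have htb : t * b = -(|u0| + 1) := by
        rw [htdef]; field_simp
      rw [htb] at hkey
      have := neg_abs_le u0
      linarith
    have hw₀ne : w₀ ≠ 0 := by
      intro h
      have h1 := hg2 c₀ hc₀
      have h2 : g c₀ = 0 := by rw [← hw₀eq, h]; simp
      have h3 : g a₀ = 0 := by rw [← hw₀eq, h]; simp
      rw [h3] at hg1; rw [h2] at h1; linarith
    set s0 := Nd w₀ with hs0def
    have hs0 : 0 < s0 := hNdpos _ hw₀ne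
    set u1 := s0⁻¹ • w₀ with hu1def
    have hu1 : Nd u1 = 1 := by
      rw [hu1def, hNdscale _ _ (inv_pos.2 hs0), ← hs0def, inv_mul_cancel₀ hs0.ne']
    have hu1C : ∀ ch ∈ C, 0 ≤ ⟪u1, ch⟫ := by
      intro ch hc
      rw [hu1def, real_inner_smul_left]
      exact mul_nonneg (inv_pos.2 hs0).le (hw₀C ch hc)
    have hfin : ((fun v => ⟪u1, v⟫) '' (f '' Xbar)).Finite := (hXbarfin.image f).image _
    set β0 := sInf ((fun v => ⟪u1, v⟫) '' (f '' Xbar)) with hβ0def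
    have hβ0 : ∀ v ∈ f '' Xbar, β0 ≤ ⟪u1, v⟫ := fun v hv =>
      csInf_le hfin.bddBelow ⟨v, hv, rfl⟩
    have hhull : convexHull ℝ (f '' Xbar) ⊆ {v | β0 ≤ ⟪u1, v⟫} := by
      refine convexHull_min hβ0 ?_
      exact convex_halfSpace_ge
        ⟨fun x y => inner_add_right _ _ _, fun r x => real_inner_smul_right _ _ _⟩ β0
    have hu : ((u1, β0 - ε) : EuclideanSpace ℝ (Fin q) × ℝ) ∈ Dε := by
      rw [hDε]
      intro y hy
      rw [hPε] at hy
      rcases Set.mem_add.1 hy with ⟨vc, hvc, z, hz, rfl⟩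
      rcases Set.mem_add.1 hvc with ⟨v, hv, cc, hcc, rfl⟩
      have h1 : β0 ≤ ⟪u1, v⟫ := hhull hv
      have h2 : 0 ≤ ⟪u1, cc⟫ := hu1C cc hcc
      have h3 : -ε ≤ ⟪u1, z⟫ := hdual u1 z hu1 hz
      show β0 - ε ≤ ⟪u1, v + cc + z⟫
      rw [inner_add_right, inner_add_right]
      linarith
    have hp2 : p.2 ≤ 0 := by
      have himg : (fun x => ⟪p.1, f x⟫) '' X = {0} := by
        rw [hw0]
        have : (fun x => ⟪(0 : EuclideanSpace ℝ (Fin q)), f x⟫) = fun _ => (0:ℝ) := by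
          funext x; simp
        rw [this]
        exact hXne.image_const 0
      rw [himg] at hpinf
      simpa using hpinf
    refine ⟨0, le_rfl, (u1, β0 - ε), hu, hu1, -p.2, by linarith, ?_⟩
    have : p = ((0 : EuclideanSpace ℝ (Fin q)), p.2) := by
      rw [← hw0]
    rw [this]
    simp [Prod.ext_iff]
  · -- p.1 ≠ 0
    set s := Nd p.1 with hsdef
    have hs : 0 < s := hNdpos _ hw0
    set u1 := s⁻¹ • p.1 with hu1def
    have hu1 : Nd u1 = 1 := by
      rw [hu1def, hNdscale _ _ (inv_pos.2 hs), ← hsdef, inv_mul_cancel₀ hs.ne']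
    have hu1C : ∀ ch ∈ C, 0 ≤ ⟪u1, ch⟫ := by
      intro ch hc
      rw [hu1def, real_inner_smul_left]
      exact mul_nonneg (inv_pos.2 hs).le (hpC ch hc)
    set β := s⁻¹ * p.2 - ε with hβdef
    have hbar : ∀ v ∈ f '' Xbar, s⁻¹ * p.2 ≤ ⟪u1, v⟫ := by
      rintro v ⟨x, hx, rfl⟩
      rw [hu1def, real_inner_smul_left]
      exact mul_le_mul_of_nonneg_left (halin x (hXbar hx)) (inv_pos.2 hs).le
    have hhull : convexHull ℝ (f '' Xbar) ⊆ {v | s⁻¹ * p.2 ≤ ⟪u1, v⟫} := by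
      refine convexHull_min hbar ?_
      exact convex_halfSpace_ge
        ⟨fun x y => inner_add_right _ _ _, fun r x => real_inner_smul_right _ _ _⟩ _
    have hu : ((u1, β) : EuclideanSpace ℝ (Fin q) × ℝ) ∈ Dε := by
      rw [hDε]
      intro y hy
      rw [hPε] at hy
      rcases Set.mem_add.1 hy with ⟨vc, hvc, z, hz, rfl⟩
      rcases Set.mem_add.1 hvc with ⟨v, hv, cc, hcc, rfl⟩
      have h1 : s⁻¹ * p.2 ≤ ⟪u1, v⟫ := hhull hv
      have h2 : 0 ≤ ⟪u1, cc⟫ := hu1C cc hcc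
      have h3 : -ε ≤ ⟪u1, z⟫ := hdual u1 z hu1 hz
      show β ≤ ⟪u1, v + cc + z⟫
      rw [inner_add_right, inner_add_right, hβdef]
      linarith
    refine ⟨s, hs.le, (u1, β), hu, hu1, 0, le_rfl, ?_⟩
    have h1 : s • u1 = p.1 := by
      rw [hu1def, smul_smul, mul_inv_cancel₀ hs.ne', one_smul]
    have h2 : s * (β + ε) = p.2 := by
      have hsne : s ≠ 0 := hs.ne'
      rw [hβdef]; field_simp; ring
    refine Prod.ext ?_ ?_
    · show p.1 = s • u1 - 0
      rw [h1, sub_zero]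
    · show p.2 = s * (β + ε) - 0
      rw [h2, sub_zero]
end
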